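/- Let S be a nonempty finite type and let Q be a real S×S matrix with nonnegative off-diagonal entries (Q a b ≥ 0 for a ≠ b) and zero row sums (∑_b Q a b = 0 for every a). Assume every entry of the matrix exponential exp(Q) is strictly positive. Then there is exactly one π : S → ℝ with π a ≥ 0 for all a, ∑_a π a = 1, and π ᵥ* Q = 0 (for all b, ∑_a π a * Q a b = 0); moreover this π satisfies π a > 0 for all a. -/

import Mathlib

open Matrix BigOperators

section Aux

variable {S : Type*} [Fintype S] [Nonempty S] [DecidableEq S]

/-- linear map `M ↦ π ᵥ* M`. -/
noncomputable def vecMulRight (π : S → ℝ) : Matrix S S ℝ →ₗ[ℝ] (S → ℝ) where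
  toFun M := π ᵥ* M
  map_add' A B := by
    funext b; simp [Matrix.vecMul, dotProduct, mul_add, Finset.sum_add_distrib]
  map_smul' c A := by
    funext b; simp [Matrix.vecMul, dotProduct, Finset.mul_sum, mul_left_comm]

lemma vecMul_exp_of_vecMul_eq_zero (Q : Matrix S S ℝ) (π : S → ℝ)
    (h : π ᵥ* Q = 0) : π ᵥ* NormedSpace.exp Q = π := by
  letI : SeminormedRing (Matrix S S ℝ) := Matrix.linftyOpSemiNormedRing
  letI : NormedRing (Matrix S S ℝ) := Matrix.linftyOpNormedRing
  letI : NormedAlgebra ℝ (Matrix S S ℝ) := Matrix.linftyOpNormedAlgebra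
  have hsum : Summable fun n : ℕ => ((n.factorial : ℝ))⁻¹ • Q ^ n :=
    NormedSpace.expSeries_summable' (𝕂 := ℝ) Q
  have hpow : ∀ n : ℕ, n ≠ 0 → π ᵥ* Q ^ n = 0 := by
    intro n hn
    obtain ⟨m, rfl⟩ := Nat.exists_eq_succ_of_ne_zero hn
    rw [pow_succ']
    rw [← Matrix.vecMul_vecMul, h, Matrix.zero_vecMul]
  have hcont : Continuous (vecMulRight (S := S) π) :=
    LinearMap.continuous_of_finiteDimensional _
  have hmap : π ᵥ* NormedSpace.exp Q
      = ∑' n : ℕ, ((n.factorial : ℝ))⁻¹ • (π ᵥ* Q ^ n) := by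
    rw [NormedSpace.exp_eq_tsum (𝕂 := ℝ)]
    have h2 := (hsum.hasSum.map (vecMulRight (S := S) π) hcont).tsum_eq
    simp only [Function.comp_def, _root_.map_smul] at h2
    exact h2.symm
  rw [hmap]
  rw [tsum_eq_single 0 (by
    intro n hn
    rw [hpow n hn, smul_zero])]
  simp [Matrix.vecMul_one]

lemma exp_row_sum_one (Q : Matrix S S ℝ) (hrow : ∀ a : S, ∑ b, Q a b = 0)
    (a : S) : ∑ b, NormedSpace.exp Q a b = 1 := by
  letI : SeminormedRing (Matrix S S ℝ) := Matrix.linftyOpSemiNormedRing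
  letI : NormedRing (Matrix S S ℝ) := Matrix.linftyOpNormedRing
  letI : NormedAlgebra ℝ (Matrix S S ℝ) := Matrix.linftyOpNormedAlgebra
  have hQ1 : Q *ᵥ (fun _ => (1:ℝ)) = 0 := by
    funext c; simpa [Matrix.mulVec, dotProduct] using hrow c
  have hpow : ∀ n : ℕ, n ≠ 0 → Q ^ n *ᵥ (fun _ => (1:ℝ)) = 0 := by
    intro n hn
    obtain ⟨m, rfl⟩ := Nat.exists_eq_succ_of_ne_zero hn
    rw [pow_succ, ← Matrix.mulVec_mulVec, hQ1, Matrix.mulVec_zero]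
  have hsum : Summable fun n : ℕ => ((n.factorial : ℝ))⁻¹ • Q ^ n :=
    NormedSpace.expSeries_summable' (𝕂 := ℝ) Q
  let L : Matrix S S ℝ →ₗ[ℝ] (S → ℝ) :=
    { toFun := fun M => M *ᵥ (fun _ => (1:ℝ))
      map_add' := fun A B => by funext c; simp [Matrix.add_mulVec]
      map_smul' := fun c A => by funext d; simp [Matrix.smul_mulVec] }
  have hcont : Continuous L := LinearMap.continuous_of_finiteDimensional _
  have hmap : NormedSpace.exp Q *ᵥ (fun _ => (1:ℝ))
      = ∑' n : ℕ, ((n.factorial : ℝ))⁻¹ • (Q ^ n *ᵥ (fun _ => (1:ℝ))) := by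
    rw [NormedSpace.exp_eq_tsum (𝕂 := ℝ)]
    have h2 := (hsum.hasSum.map L hcont).tsum_eq
    simp only [Function.comp_def, _root_.map_smul] at h2
    exact h2.symm
  have h1 : NormedSpace.exp Q *ᵥ (fun _ => (1:ℝ)) = fun _ => (1:ℝ) := by
    rw [hmap, tsum_eq_single 0 (by intro n hn; rw [hpow n hn, smul_zero])]
    simp [Matrix.one_mulVec]
  have := congrFun h1 a
  simpa [Matrix.mulVec, dotProduct] using this

/-- a fixed vector of a strictly positive stochastic matrix cannot have both a strictly
positive and a strictly negative entry. -/
lemma no_mixed_signs (P : Matrix S S ℝ) (hP : ∀ a b, 0 < P a b)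
    (hPr : ∀ a, ∑ b, P a b = 1) (v : S → ℝ) (hv : v ᵥ* P = v)
    (i j : S) (hi : 0 < v i) (hj : v j < 0) : False := by
  have hvb : ∀ b, v b = ∑ a, v a * P a b := by
    intro b
    conv_lhs => rw [← hv]
    simp [Matrix.vecMul, dotProduct]
  have key : ∀ b, |v b| < ∑ a, |v a| * P a b := by
    intro b
    rw [hvb b, abs_lt]
    constructor
    · have : ∑ a, -(v a * P a b) < ∑ a, |v a| * P a b := by
        apply Finset.sum_lt_sum
        · intro a _
          calc -(v a * P a b) = (-(v a)) * P a b := by ring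
            _ ≤ |v a| * P a b :=
              mul_le_mul_of_nonneg_right (neg_le_abs _) (hP a b).le
        · exact ⟨i, Finset.mem_univ i, by
            have : -(v i) < |v i| := by rw [abs_of_pos hi]; linarith
            calc -(v i * P i b) = (-(v i)) * P i b := by ring
              _ < |v i| * P i b := mul_lt_mul_of_pos_right this (hP i b)⟩
      rw [Finset.sum_neg_distrib] at this
      linarith [this]
    · apply Finset.sum_lt_sum
      · intro a _
        exact mul_le_mul_of_nonneg_right (le_abs_self _) (hP a b).le
      · exact ⟨j, Finset.mem_univ j, by
          have : v j < |v j| := by rw [abs_of_neg hj]; linarith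
          exact mul_lt_mul_of_pos_right this (hP j b)⟩
  have h1 : ∑ b, |v b| < ∑ b, ∑ a, |v a| * P a b :=
    Finset.sum_lt_sum_of_nonempty Finset.univ_nonempty (fun b _ => key b)
  have h2 : ∑ b : S, ∑ a, |v a| * P a b = ∑ a : S, |v a| := by
    rw [Finset.sum_comm]
    refine Finset.sum_congr rfl fun a _ => ?_
    rw [← Finset.mul_sum, hPr a, mul_one]
  rw [h2] at h1
  exact absurd h1 (lt_irrefl _)

end Aux

/-- Uniqueness (and positivity) of the stationary probability vector of an irreducible
conservative Q-matrix: if `Q` has nonnegative off-diagonal entries, zero row sums, and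
`exp Q` has strictly positive entries, then there is exactly one stationary probability
vector `π`, and it is strictly positive (Section 4.1 of the paper). -/
theorem stationary_law_unique
    {S : Type*} [Fintype S] [Nonempty S] [DecidableEq S]
    (Q : Matrix S S ℝ)
    (hMetzler : ∀ a b : S, a ≠ b → 0 ≤ Q a b)
    (hrow : ∀ a : S, ∑ b, Q a b = 0)
    (hirr : ∀ a b : S, 0 < NormedSpace.exp Q a b) :
    ∃ π : S → ℝ,
      (∀ a, 0 < π a) ∧ (∑ a, π a = 1) ∧ π ᵥ* Q = 0 ∧
      ∀ π' : S → ℝ, (∀ a, 0 ≤ π' a) → (∑ a, π' a = 1) → π' ᵥ* Q = 0 → π' = π := by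
  set P := NormedSpace.exp Q with hPdef
  have hProw : ∀ a, ∑ b, P a b = 1 := exp_row_sum_one Q hrow
  -- det Q = 0 since Q *ᵥ 1 = 0
  have hdet : Q.det = 0 := by
    rw [← Matrix.exists_mulVec_eq_zero_iff]
    exact ⟨fun _ => 1, by simp [funext_iff],
      by funext c; simpa [Matrix.mulVec, dotProduct] using hrow c⟩
  obtain ⟨v, hv0, hvQ⟩ := Matrix.exists_vecMul_eq_zero_iff.mpr hdet
  have hvP : v ᵥ* P = v := vecMul_exp_of_vecMul_eq_zero Q v hvQ
  -- v has no mixed signs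
  have hsign : (∀ a, 0 ≤ v a) ∨ (∀ a, v a ≤ 0) := by
    by_contra h
    push_neg at h
    obtain ⟨⟨j, hj⟩, ⟨i, hi⟩⟩ := h
    exact no_mixed_signs P hirr hProw v hvP i j hi hj
  -- replace v by a nonnegative nonzero vector w
  obtain ⟨w, hw0, hwnn, hwQ⟩ : ∃ w : S → ℝ, w ≠ 0 ∧ (∀ a, 0 ≤ w a) ∧ w ᵥ* Q = 0 := by
    rcases hsign with h | h
    · exact ⟨v, hv0, h, hvQ⟩
    · refine ⟨-v, by simpa using neg_ne_zero.mpr hv0, fun a => by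
        simpa using neg_nonneg.mpr (h a), ?_⟩
      rw [Matrix.neg_vecMul, hvQ, neg_zero]
  have hwsum : 0 < ∑ a, w a := by
    rcases (Finset.sum_nonneg (fun a (_ : a ∈ Finset.univ) => hwnn a)).lt_or_eq with h | h
    · exact h
    · exfalso
      apply hw0
      funext a
      exact (Finset.sum_eq_zero_iff_of_nonneg (fun a _ => hwnn a)).mp h.symm a
        (Finset.mem_univ a)
  set s := ∑ a, w a with hs
  set π : S → ℝ := fun a => w a / s with hπ
  have hπnn : ∀ a, 0 ≤ π a := fun a => div_nonneg (hwnn a) hwsum.le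
  have hπsum : ∑ a, π a = 1 := by
    simp only [hπ, div_eq_mul_inv, ← Finset.sum_mul]
    rw [← hs, mul_inv_cancel₀ hwsum.ne']
  have hπQ : π ᵥ* Q = 0 := by
    funext b
    have := congrFun hwQ b
    simp only [Matrix.vecMul, dotProduct, Pi.zero_apply] at this ⊢
    simp only [hπ, div_eq_mul_inv]
    rw [show ∑ a, w a * s⁻¹ * Q a b = (∑ a, w a * Q a b) * s⁻¹ by
      rw [Finset.sum_mul]; exact Finset.sum_congr rfl fun a _ => by ring]
    rw [this, zero_mul]
  have hπP : π ᵥ* P = π := vecMul_exp_of_vecMul_eq_zero Q π hπQ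
  -- strict positivity
  have hπpos : ∀ a, 0 < π a := by
    intro b
    obtain ⟨a0, ha0⟩ : ∃ a0, 0 < π a0 := by
      by_contra h
      push_neg at h
      have : ∑ a, π a = 0 := le_antisymm (Finset.sum_nonpos fun a _ => h a)
        (Finset.sum_nonneg fun a _ => hπnn a)
      rw [hπsum] at this; norm_num at this
    have hb : π b = ∑ a, π a * P a b := by
      conv_lhs => rw [← hπP]
      simp [Matrix.vecMul, dotProduct]
    rw [hb]
    exact Finset.sum_pos' (fun a _ => mul_nonneg (hπnn a) (hirr a b).le)
      ⟨a0, Finset.mem_univ a0, mul_pos ha0 (hirr a0 b)⟩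
  refine ⟨π, hπpos, hπsum, hπQ, ?_⟩
  intro π' hπ'nn hπ'sum hπ'Q
  have hdP : (π' - π) ᵥ* P = π' - π := by
    rw [Matrix.sub_vecMul, hπP, vecMul_exp_of_vecMul_eq_zero Q π' hπ'Q]
  by_contra hne
  have hdne : π' - π ≠ 0 := sub_ne_zero.mpr hne
  have hdsum : ∑ a, (π' - π) a = 0 := by
    simp only [Pi.sub_apply, Finset.sum_sub_distrib, hπsum, hπ'sum, sub_self]
  -- mixed signs exist
  obtain ⟨a0, ha0⟩ : ∃ a, (π' - π) a ≠ 0 := by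
    by_contra h
    push_neg at h
    exact hdne (funext h)
  rcases ha0.lt_or_gt with hneg | hpos
  · -- a0 negative; need a positive entry
    obtain ⟨i, hi⟩ : ∃ i, 0 < (π' - π) i := by
      by_contra h
      push_neg at h
      have := Finset.sum_eq_zero_iff_of_nonpos (fun a _ => h a) |>.mp hdsum a0
        (Finset.mem_univ a0)
      exact absurd this hneg.ne
    exact no_mixed_signs P hirr hProw _ hdP i a0 hi hneg
  · obtain ⟨j, hj⟩ : ∃ j, (π' - π) j < 0 := by
      by_contra h
      push_neg at h
      have := Finset.sum_eq_zero_iff_of_nonneg (fun a _ => h a) |>.mp hdsum a0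
        (Finset.mem_univ a0)
      exact absurd this hpos.ne'
    exact no_mixed_signs P hirr hProw _ hdP a0 j hpos hj
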